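/- Let γ ∈ (1,2], let ω, p, q ∈ ℝⁿ, let a, b ∈ ℝ, and let β : ℝ → ℝ satisfy |β(s)| ≤ M for all s and |β(s) − β(r)| ≤ L|s − r| for all s, r. Then |(ω·p + β(a)|p|)₋ − (ω·q + β(b)|q|^{2−γ})₋| ≤ |ω| |p − q| + M · | |p| − |p|^{2−γ} | + M · |p − q|^{2−γ} + √(2 M L) · |a − b|^{1/2} · |q|^{2−γ}, where |·| denotes the Euclidean norm on ℝⁿ (and absolute value on ℝ) and · denotes the Euclidean inner product. -/

import Mathlib

open Real

lemma aux_rpow_add_le (x y α : ℝ) (hx : 0 ≤ x) (hy : 0 ≤ y) (h0 : 0 ≤ α) (h1 : α ≤ 1) :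
    (x + y) ^ α ≤ x ^ α + y ^ α := by
  lift x to NNReal using hx
  lift y to NNReal using hy
  have := NNReal.rpow_add_le_add_rpow x y h0 h1
  exact_mod_cast this

lemma aux_abs_rpow_sub (x y α : ℝ) (hx : 0 ≤ x) (hy : 0 ≤ y) (h0 : 0 ≤ α) (h1 : α ≤ 1) :
    |x ^ α - y ^ α| ≤ |x - y| ^ α := by
  rcases le_total x y with h | h
  · rw [abs_sub_comm, abs_sub_comm x y]
    rw [abs_of_nonneg (sub_nonneg.2 (Real.rpow_le_rpow hx h h0)),
      abs_of_nonneg (sub_nonneg.2 h)]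
    have : y ^ α ≤ x ^ α + (y - x) ^ α := by
      calc y ^ α = (x + (y - x)) ^ α := by ring_nf
        _ ≤ x ^ α + (y - x) ^ α := aux_rpow_add_le _ _ _ hx (by linarith) h0 h1
    linarith
  · rw [abs_of_nonneg (sub_nonneg.2 (Real.rpow_le_rpow hy h h0)),
      abs_of_nonneg (sub_nonneg.2 h)]
    have : x ^ α ≤ y ^ α + (x - y) ^ α := by
      calc x ^ α = (y + (x - y)) ^ α := by ring_nf
        _ ≤ y ^ α + (x - y) ^ α := aux_rpow_add_le _ _ _ hy (by linarith) h0 h1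
    linarith

/-- Pointwise comparison of the convective term with exponent `1` at `(a, p)` to the
convective term with exponent `γ ∈ (1,2]` at `(b, q)`, for `β` bounded by `M` and
`L`-Lipschitz:
`|(ω·p + β(a)|p|)₋ − (ω·q + β(b)|q|^(2−γ))₋|
  ≤ |ω||p−q| + M | |p| − |p|^(2−γ) | + M |p−q|^(2−γ) + √(2ML) |a−b|^(1/2) |q|^(2−γ)`. -/
theorem convective_exponent_comparison (n : ℕ) (γ : ℝ) (hγ₁ : 1 < γ) (hγ₂ : γ ≤ 2)
    (ω p q : EuclideanSpace ℝ (Fin n)) (a b : ℝ) (M L : ℝ)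
    (β : ℝ → ℝ) (hβM : ∀ s, |β s| ≤ M) (hβL : ∀ s r, |β s - β r| ≤ L * |s - r|) :
    |max (-((inner ℝ ω p : ℝ) + β a * ‖p‖)) 0 -
        max (-((inner ℝ ω q : ℝ) + β b * ‖q‖ ^ (2 - γ))) 0| ≤
      ‖ω‖ * ‖p - q‖ + M * |‖p‖ - ‖p‖ ^ (2 - γ)| + M * ‖p - q‖ ^ (2 - γ) +
        Real.sqrt (2 * M * L) * |a - b| ^ ((1 : ℝ) / 2) * ‖q‖ ^ (2 - γ) := by
  have hM : 0 ≤ M := (abs_nonneg _).trans (hβM 0)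
  have hL : 0 ≤ L := by
    have h := hβL 1 0
    simp only [sub_zero, abs_one, mul_one] at h
    exact (abs_nonneg _).trans h
  set α : ℝ := 2 - γ with hα
  have hα0 : 0 ≤ α := by linarith
  have hα1 : α ≤ 1 := by linarith
  set x : ℝ := (inner ℝ ω p : ℝ) + β a * ‖p‖
  set y : ℝ := (inner ℝ ω q : ℝ) + β b * ‖q‖ ^ α
  have step1 : |max (-x) 0 - max (-y) 0| ≤ |x - y| := by
    have h := abs_max_sub_max_le_abs (-x) (-y) 0
    rwa [neg_sub_neg, abs_sub_comm y x] at h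
  refine step1.trans ?_
  have hxy : x - y = (inner ℝ ω (p - q) : ℝ) + β a * (‖p‖ - ‖p‖ ^ α)
      + β a * (‖p‖ ^ α - ‖q‖ ^ α) + (β a - β b) * ‖q‖ ^ α := by
    simp only [x, y, inner_sub_right]
    ring
  have h1 : |(inner ℝ ω (p - q) : ℝ)| ≤ ‖ω‖ * ‖p - q‖ := abs_real_inner_le_norm ω (p - q)
  have h2 : |β a * (‖p‖ - ‖p‖ ^ α)| ≤ M * |‖p‖ - ‖p‖ ^ α| := by
    rw [abs_mul]
    exact mul_le_mul_of_nonneg_right (hβM a) (abs_nonneg _)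
  have h3 : |β a * (‖p‖ ^ α - ‖q‖ ^ α)| ≤ M * ‖p - q‖ ^ α := by
    rw [abs_mul]
    have hd : |‖p‖ ^ α - ‖q‖ ^ α| ≤ ‖p - q‖ ^ α := by
      have := aux_abs_rpow_sub ‖p‖ ‖q‖ α (norm_nonneg _) (norm_nonneg _) hα0 hα1
      refine this.trans ?_
      exact Real.rpow_le_rpow (abs_nonneg _) (abs_norm_sub_norm_le p q) hα0
    exact mul_le_mul (hβM a) hd (abs_nonneg _) hM
  have h4 : |(β a - β b) * ‖q‖ ^ α| ≤ Real.sqrt (2 * M * L) * |a - b| ^ ((1:ℝ)/2) * ‖q‖ ^ α := by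
    rw [abs_mul, abs_of_nonneg (Real.rpow_nonneg (norm_nonneg q) α)]
    refine mul_le_mul_of_nonneg_right ?_ (Real.rpow_nonneg (norm_nonneg q) α)
    have hb1 : |β a - β b| ≤ 2 * M := by
      calc |β a - β b| ≤ |β a| + |β b| := abs_sub _ _
        _ ≤ M + M := add_le_add (hβM a) (hβM b)
        _ = 2 * M := by ring
    have hb2 : |β a - β b| ≤ L * |a - b| := hβL a b
    have hsq : |β a - β b| ^ 2 ≤ (2 * M) * (L * |a - b|) := by
      nlinarith [abs_nonneg (β a - β b)]
    have : |β a - β b| ≤ Real.sqrt ((2 * M) * (L * |a - b|)) := by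
      rw [show |β a - β b| = Real.sqrt (|β a - β b| ^ 2) by
        rw [Real.sqrt_sq (abs_nonneg _)]]
      exact Real.sqrt_le_sqrt hsq
    refine this.trans ?_
    rw [show (2 * M) * (L * |a - b|) = (2 * M * L) * |a - b| by ring,
      Real.sqrt_mul (by positivity),
      show Real.sqrt |a - b| = |a - b| ^ ((1:ℝ)/2) from Real.sqrt_eq_rpow _]
  calc |x - y| ≤ |(inner ℝ ω (p - q) : ℝ)| + |β a * (‖p‖ - ‖p‖ ^ α)|
        + |β a * (‖p‖ ^ α - ‖q‖ ^ α)| + |(β a - β b) * ‖q‖ ^ α| := by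
        rw [hxy]
        exact (abs_add_le _ _).trans (add_le_add ((abs_add_le _ _).trans
          (add_le_add (abs_add_le _ _) le_rfl)) le_rfl)
    _ ≤ _ := add_le_add (add_le_add (add_le_add h1 h2) h3) h4
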